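/- Let E be an exponential random variable with rate 1 on a probability space (Ω, P), and let S be a real-valued random variable with S ≤ 0 almost surely, independent of E. Then for every z ≥ 0, P(E + S > z) = exp(-z) · E[exp(S)]; in particular E[exp(S)] > 0 and P(E + S > z | E + S > 0) = exp(-z). -/
import Mathlib


open MeasureTheory ProbabilityTheory

theorem exp_plus_neg_shift_tail
    {Ω : Type*} [MeasurableSpace Ω] (P : Measure Ω) [IsProbabilityMeasure P]
    (E S : Ω → ℝ) (hE : Measurable E) (hS : Measurable S)
    (hExp : ∀ x : ℝ, 0 ≤ x → P {ω | x < E ω} = ENNReal.ofReal (Real.exp (-x)))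
    (hSneg : ∀ᵐ ω ∂P, S ω ≤ 0)
    (hIndep : IndepFun E S P) :
    0 < (∫ ω, Real.exp (S ω) ∂P) ∧
    ∀ z : ℝ, 0 ≤ z →
      P {ω | z < E ω + S ω}
          = ENNReal.ofReal (Real.exp (-z) * ∫ ω, Real.exp (S ω) ∂P) ∧
      (ProbabilityTheory.cond P {ω | 0 < E ω + S ω}) {ω | z < E ω + S ω}
          = ENNReal.ofReal (Real.exp (-z)) := by
  set I := ∫ ω, Real.exp (S ω) ∂P with hI
  -- integrability of exp ∘ S
  have hInt : Integrable (fun ω => Real.exp (S ω)) P := by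
    refine (integrable_const (1 : ℝ)).mono' (hS.exp.aestronglyMeasurable) ?_
    filter_upwards [hSneg] with ω hω
    rw [Real.norm_eq_abs, abs_of_pos (Real.exp_pos _)]
    exact Real.exp_le_one_iff.mpr hω
  have hIpos : 0 < I := by
    rw [hI, integral_pos_iff_support_of_nonneg (fun ω => (Real.exp_pos _).le) hInt]
    have : Function.support (fun ω => Real.exp (S ω)) = Set.univ := by
      ext ω; simp [Function.mem_support, (Real.exp_pos _).ne']
    rw [this]
    simp
  -- lintegral of exp ∘ S equals ofReal I
  have hlint : ∫⁻ ω, ENNReal.ofReal (Real.exp (S ω)) ∂P = ENNReal.ofReal I := by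
    rw [hI, ofReal_integral_eq_lintegral_ofReal hInt
      (Filter.Eventually.of_forall fun ω => (Real.exp_pos _).le)]
  -- distribution of (S, E) is product
  have hmap : P.map (fun ω => (S ω, E ω)) = (P.map S).prod (P.map E) :=
    (indepFun_iff_map_prod_eq_prod_map_map hS.aemeasurable hE.aemeasurable).mp hIndep.symm
  have hSae : ∀ᵐ s ∂(P.map S), s ≤ 0 := by
    rw [ae_map_iff hS.aemeasurable (measurableSet_Iic (a := (0:ℝ)))]
    exact hSneg
  -- main tail formula
  have key : ∀ z : ℝ, 0 ≤ z →
      P {ω | z < E ω + S ω} = ENNReal.ofReal (Real.exp (-z) * I) := by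
    intro z hz
    have hmeas : MeasurableSet {p : ℝ × ℝ | z < p.2 + p.1} :=
      measurableSet_lt measurable_const (measurable_snd.add measurable_fst)
    have h1 : P {ω | z < E ω + S ω}
        = (P.map (fun ω => (S ω, E ω))) {p : ℝ × ℝ | z < p.2 + p.1} := by
      rw [Measure.map_apply (hS.prodMk hE) hmeas]
      rfl
    rw [h1, hmap, Measure.prod_apply hmeas]
    have h2 : ∀ᵐ s ∂(P.map S),
        (P.map E) (Prod.mk s ⁻¹' {p : ℝ × ℝ | z < p.2 + p.1})
          = ENNReal.ofReal (Real.exp (-z)) * ENNReal.ofReal (Real.exp s) := by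
      filter_upwards [hSae] with s hs
      have hset : (Prod.mk s ⁻¹' {p : ℝ × ℝ | z < p.2 + p.1}) = {x : ℝ | z - s < x} := by
        ext x; simp [Set.mem_preimage, sub_lt_iff_lt_add]
      rw [hset, show {x : ℝ | z - s < x} = Set.Ioi (z - s) from rfl,
        Measure.map_apply hE measurableSet_Ioi,
        show E ⁻¹' Set.Ioi (z - s) = {ω | z - s < E ω} from rfl,
        hExp (z - s) (by linarith)]
      rw [← ENNReal.ofReal_mul (Real.exp_pos _).le, ← Real.exp_add]
      ring_nf
    rw [lintegral_congr_ae h2, lintegral_const_mul' _ _ ENNReal.ofReal_ne_top,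
      lintegral_map (by measurability) hS, hlint,
      ← ENNReal.ofReal_mul (Real.exp_pos _).le]
  refine ⟨hIpos, fun z hz => ?_⟩
  refine ⟨key z hz, ?_⟩
  have hA : MeasurableSet {ω | 0 < E ω + S ω} :=
    measurableSet_lt measurable_const (hE.add hS)
  have hsub : {ω | z < E ω + S ω} ⊆ {ω | 0 < E ω + S ω} :=
    fun ω hω => lt_of_le_of_lt hz hω
  rw [ProbabilityTheory.cond_apply hA, Set.inter_eq_self_of_subset_right hsub,
    key z hz, key 0 le_rfl]
  have h0 : Real.exp (-(0:ℝ)) * I = I := by simp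
  rw [h0, ENNReal.ofReal_mul (Real.exp_pos _).le, mul_comm (ENNReal.ofReal (Real.exp (-z))),
    ← mul_assoc, ENNReal.inv_mul_cancel (by simpa using hIpos) ENNReal.ofReal_ne_top, one_mul]
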